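/- Let F : ℝ^d → ℝ be a differentiable function whose gradient is Lipschitz continuous with constant L > 0, which is c-strongly convex for some 0 < c ≤ L, and which attains its minimum value F*. Fix w ∈ ℝ^d and a step size η with 0 < η ≤ 1/L. Let g be an ℝ^d-valued random vector with E[g] = ∇F(w) and E[‖g − ∇F(w)‖²] ≤ v for some v ≥ 0. Then E[F(w − ηg)] − F* ≤ (1 − ηc)(F(w) − F*) + η² L v / 2. -/

import Mathlib

open MeasureTheory ProbabilityTheory RealInnerProductSpace

lemma sgd_descent_lemma {d : ℕ} (F : EuclideanSpace ℝ (Fin d) → ℝ)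
    (L : ℝ) (hL : 0 < L) (hF : Differentiable ℝ F)
    (hLip : ∀ x y, ‖gradient F x - gradient F y‖ ≤ L * ‖x - y‖)
    (x y : EuclideanSpace ℝ (Fin d)) :
    F y ≤ F x + ⟪gradient F x, y - x⟫ + L / 2 * ‖y - x‖ ^ 2 := by
  set u := y - x with hu
  have key : ∀ t : ℝ, HasDerivAt (fun s : ℝ => F (x + s • u))
      ⟪gradient F (x + t • u), u⟫ t := by
    intro t
    have h1 : HasDerivAt (fun s : ℝ => x + s • u) u t := by
      simpa using ((hasDerivAt_id t).smul_const u).const_add x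
    have h2 := ((hF (x + t • u)).hasGradientAt).hasFDerivAt
    have h3 := h2.comp_hasDerivAt t h1
    simpa [Function.comp_def] using h3
  have hgc : Continuous (gradient F) :=
    (LipschitzWith.of_dist_le_mul (K := ⟨L, hL.le⟩) (fun a b => by
      rw [dist_eq_norm, dist_eq_norm]; exact hLip a b)).continuous
  have hcont : Continuous fun t : ℝ => ⟪gradient F (x + t • u), u⟫ := by
    exact (Continuous.inner (hgc.comp (by continuity)) continuous_const)
  have hFTC : ∫ t in (0:ℝ)..1, ⟪gradient F (x + t • u), u⟫ = F y - F x := by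
    have := intervalIntegral.integral_eq_sub_of_hasDerivAt
      (f := fun s : ℝ => F (x + s • u)) (fun t _ => key t)
      (hcont.intervalIntegrable 0 1)
    simpa [hu] using this
  have hmono : ∫ t in (0:ℝ)..1, ⟪gradient F (x + t • u), u⟫ ≤
      ∫ t in (0:ℝ)..1, (⟪gradient F x, u⟫ + L * t * ‖u‖ ^ 2) := by
    apply intervalIntegral.integral_mono_on (by norm_num)
      (hcont.intervalIntegrable 0 1)
      ((by continuity : Continuous fun t : ℝ => ⟪gradient F x, u⟫ + L * t * ‖u‖ ^ 2).intervalIntegrable 0 1)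
    intro t ht
    rcases ht with ⟨ht0, _⟩
    have h1 : ⟪gradient F (x + t • u), u⟫ - ⟪gradient F x, u⟫
        = ⟪gradient F (x + t • u) - gradient F x, u⟫ := by
      rw [inner_sub_left]
    have h2 : ⟪gradient F (x + t • u) - gradient F x, u⟫ ≤
        ‖gradient F (x + t • u) - gradient F x‖ * ‖u‖ :=
      real_inner_le_norm _ _
    have h3 : ‖gradient F (x + t • u) - gradient F x‖ ≤ L * ‖t • u‖ := by
      simpa using hLip (x + t • u) x
    have h4 : ‖t • u‖ = t * ‖u‖ := by
      rw [norm_smul, Real.norm_eq_abs, abs_of_nonneg ht0]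
    rw [h4] at h3
    nlinarith [mul_le_mul_of_nonneg_right h3 (norm_nonneg u), sq_nonneg ‖u‖]
  have hval : ∫ t in (0:ℝ)..1, (⟪gradient F x, u⟫ + L * t * ‖u‖ ^ 2)
      = ⟪gradient F x, u⟫ + L / 2 * ‖u‖ ^ 2 := by
    have heq : (fun t : ℝ => ⟪gradient F x, u⟫ + L * t * ‖u‖ ^ 2)
        = fun t : ℝ => ⟪gradient F x, u⟫ + (L * ‖u‖ ^ 2) * t := by
      funext t; ring
    rw [heq, intervalIntegral.integral_add intervalIntegrable_const
      ((by fun_prop : Continuous fun t : ℝ => L * ‖u‖ ^ 2 * t).intervalIntegrable 0 1),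
      intervalIntegral.integral_const_mul, integral_id, intervalIntegral.integral_const]
    simp; ring
  rw [hFTC] at hmono
  rw [hval] at hmono
  linarith

lemma sgd_grad_zero {d : ℕ} (F : EuclideanSpace ℝ (Fin d) → ℝ) (Fstar : ℝ)
    (hF : Differentiable ℝ F) (hmin : ∀ x, Fstar ≤ F x)
    (x : EuclideanSpace ℝ (Fin d)) (hx : F x = Fstar) : gradient F x = 0 := by
  have hloc : IsLocalMin F x :=
    Filter.Eventually.of_forall (fun y => by rw [hx]; exact hmin y)
  have hfd := hloc.fderiv_eq_zero
  simp [gradient, hfd]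

set_option maxHeartbeats 1000000 in
/-- One-step expected contraction lemma for SGD with fixed step size and an
unbiased stochastic gradient of variance at most v. -/
theorem sgd_one_step_contraction
    {d : ℕ} {Ω : Type*} [MeasurableSpace Ω] (μ : Measure Ω) [IsProbabilityMeasure μ]
    (F : EuclideanSpace ℝ (Fin d) → ℝ) (Fstar : ℝ)
    (L c : ℝ) (hL : 0 < L) (hc : 0 < c) (hcL : c ≤ L)
    (hF : Differentiable ℝ F)
    (hLip : ∀ x y, ‖gradient F x - gradient F y‖ ≤ L * ‖x - y‖)
    (hStrong : ∀ x y, F x + ⟪gradient F x, y - x⟫ + c / 2 * ‖y - x‖ ^ 2 ≤ F y)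
    (hmin : ∀ x, Fstar ≤ F x) (hattain : ∃ x, F x = Fstar)
    (w : EuclideanSpace ℝ (Fin d))
    (η : ℝ) (hη : 0 < η) (hηL : η ≤ 1 / L)
    (g : Ω → EuclideanSpace ℝ (Fin d)) (hgmeas : Measurable g) (hgint : Integrable g μ)
    (hgmean : ∫ ω, g ω ∂μ = gradient F w)
    (v : ℝ) (hv : 0 ≤ v)
    (hgvar : ∫ ω, ‖g ω - gradient F w‖ ^ 2 ∂μ ≤ v)
    (hFint : Integrable (fun ω => F (w - η • g ω)) μ) :
    (∫ ω, F (w - η • g ω) ∂μ) - Fstar ≤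
      (1 - η * c) * (F w - Fstar) + η ^ 2 * L * v / 2 := by

  obtain ⟨xs, hxs⟩ := hattain
  set A := gradient F w with hA
  have hAz : gradient F xs = 0 := sgd_grad_zero F Fstar hF hmin xs hxs
  -- quadratic growth
  have hqg : ∀ y, Fstar + c / 2 * ‖y - xs‖ ^ 2 ≤ F y := by
    intro y
    have := hStrong xs y
    rw [hAz, hxs] at this
    simpa using this
  -- PL inequality
  have hPL : 2 * c * (F w - Fstar) ≤ ‖A‖ ^ 2 := by
    have h := hStrong w xs
    rw [hxs] at h
    have hCS : -(‖A‖ * ‖xs - w‖) ≤ ⟪A, xs - w⟫ := by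
      have := abs_real_inner_le_norm A (xs - w)
      linarith [neg_abs_le (⟪A, xs - w⟫ : ℝ)]
    nlinarith [sq_nonneg (c * ‖xs - w‖ - ‖A‖), hc]
  -- integrability of ‖w - η•g - xs‖^2
  have hmeasq : AEStronglyMeasurable (fun ω => ‖w - η • g ω - xs‖ ^ 2) μ := by
    apply Measurable.aestronglyMeasurable
    fun_prop
  have h1 : Integrable (fun ω => ‖w - η • g ω - xs‖ ^ 2) μ := by
    apply Integrable.mono' (((hFint.sub (integrable_const Fstar)).const_mul (2 / c))) hmeasq
    filter_upwards with ω
    have hq := hqg (w - η • g ω)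
    simp only [Pi.sub_apply]
    rw [Real.norm_eq_abs, abs_of_nonneg (by positivity), div_mul_eq_mul_div,
      le_div_iff₀ hc]
    linarith
  -- integrability of ‖g - A‖^2
  have h2 : Integrable (fun ω => ‖g ω - A‖ ^ 2) μ := by
    set b := (1 / η) • (w - xs) with hb
    apply Integrable.mono' ((h1.const_mul (2 / η ^ 2)).add (integrable_const (2 * ‖b - A‖ ^ 2)))
      (Measurable.aestronglyMeasurable (by fun_prop))
    filter_upwards with ω
    have hgb : ‖g ω - b‖ = (1 / η) * ‖w - η • g ω - xs‖ := by
      have : g ω - b = -((1 / η) • (w - η • g ω - xs)) := by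
        rw [hb]
        match_scalars <;> field_simp
      rw [this, norm_neg, norm_smul, Real.norm_eq_abs, abs_of_pos (by positivity)]
    have htri : ‖g ω - A‖ ≤ ‖g ω - b‖ + ‖b - A‖ := norm_sub_le_norm_sub_add_norm_sub _ _ _
    rw [Real.norm_eq_abs, abs_of_nonneg (by positivity)]
    have h5 : ‖g ω - A‖ ^ 2 ≤ 2 * ‖g ω - b‖ ^ 2 + 2 * ‖b - A‖ ^ 2 := by
      nlinarith [norm_nonneg (g ω - A), norm_nonneg (g ω - b), norm_nonneg (b - A),
        sq_nonneg (‖g ω - b‖ - ‖b - A‖)]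
    rw [hgb] at h5
    have : (1 / η) ^ 2 = 1 / η ^ 2 := by field_simp
    calc ‖g ω - A‖ ^ 2 ≤ 2 * ((1 / η) * ‖w - η • g ω - xs‖) ^ 2 + 2 * ‖b - A‖ ^ 2 := h5
      _ = 2 / η ^ 2 * ‖w - η • g ω - xs‖ ^ 2 + 2 * ‖b - A‖ ^ 2 := by field_simp
  -- pointwise descent bound
  have hpt : ∀ ω, F (w - η • g ω) ≤
      F w + (L * η ^ 2 - η) * ⟪A, g ω⟫ + (L * η ^ 2 / 2) * ‖g ω - A‖ ^ 2
        - (L * η ^ 2 / 2) * ‖A‖ ^ 2 := by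
    intro ω
    have hd := sgd_descent_lemma F L hL hF hLip w (w - η • g ω)
    have h6 : (w - η • g ω) - w = -(η • g ω) := by abel
    have h7 : ⟪A, (w - η • g ω) - w⟫ = -η * ⟪A, g ω⟫ := by
      rw [h6, inner_neg_right, inner_smul_right]; ring
    have h8 : ‖(w - η • g ω) - w‖ ^ 2 = η ^ 2 * ‖g ω‖ ^ 2 := by
      rw [h6, norm_neg, norm_smul, Real.norm_eq_abs, mul_pow, sq_abs]
    have h9 : ‖g ω - A‖ ^ 2 = ‖g ω‖ ^ 2 - 2 * ⟪A, g ω⟫ + ‖A‖ ^ 2 := by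
      rw [norm_sub_sq_real, real_inner_comm]
    rw [h7, h8] at hd
    rw [h9]
    linarith [hd]
  -- integrate
  have hintA : Integrable (fun ω => ⟪A, g ω⟫) μ := hgint.const_inner A
  have hRHSint : Integrable (fun ω =>
      F w + (L * η ^ 2 - η) * ⟪A, g ω⟫ + (L * η ^ 2 / 2) * ‖g ω - A‖ ^ 2
        - (L * η ^ 2 / 2) * ‖A‖ ^ 2) μ := by
    exact (((integrable_const (F w)).add (hintA.const_mul _)).add
      (h2.const_mul _)).sub (integrable_const _)
  have hmono := integral_mono hFint hRHSint (fun ω => hpt ω)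
  have hIA : ∫ ω, ⟪A, g ω⟫ ∂μ = ‖A‖ ^ 2 := by
    rw [integral_inner hgint A, hgmean]
    exact real_inner_self_eq_norm_sq A
  have hsplit : ∫ ω, (F w + (L * η ^ 2 - η) * ⟪A, g ω⟫ + (L * η ^ 2 / 2) * ‖g ω - A‖ ^ 2
        - (L * η ^ 2 / 2) * ‖A‖ ^ 2) ∂μ
      = F w + (L * η ^ 2 - η) * ‖A‖ ^ 2
        + (L * η ^ 2 / 2) * (∫ ω, ‖g ω - A‖ ^ 2 ∂μ) - (L * η ^ 2 / 2) * ‖A‖ ^ 2 := by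
    have i1 : Integrable (fun ω => F w + (L * η ^ 2 - η) * ⟪A, g ω⟫) μ :=
      (integrable_const _).add (hintA.const_mul _)
    have i3 : Integrable (fun ω => F w + (L * η ^ 2 - η) * ⟪A, g ω⟫
        + L * η ^ 2 / 2 * ‖g ω - A‖ ^ 2) μ := i1.add (h2.const_mul _)
    rw [integral_sub i3 (integrable_const _),
      integral_add i1 (h2.const_mul _),
      integral_add (integrable_const (F w)) (hintA.const_mul _),
      MeasureTheory.integral_const_mul, MeasureTheory.integral_const_mul, hIA]
    simp [measure_univ]
  rw [hsplit] at hmono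
  have hInn : 0 ≤ ∫ ω, ‖g ω - A‖ ^ 2 ∂μ :=
    integral_nonneg (fun ω => by positivity)
  have hLη : L * η ≤ 1 := by
    rw [le_div_iff₀ hL] at hηL; linarith
  have hD : 0 ≤ F w - Fstar := by linarith [hmin w]
  set I := ∫ ω, ‖g ω - A‖ ^ 2 ∂μ
  set S := ‖A‖ ^ 2 with hS
  have hS0 : 0 ≤ S := sq_nonneg _
  have t1 : 0 ≤ (η * (1 - L * η) / 2) * S :=
    mul_nonneg (div_nonneg (mul_nonneg hη.le (sub_nonneg.mpr hLη)) (by norm_num)) hS0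
  have t2 : (L * η ^ 2 / 2) * I ≤ (L * η ^ 2 / 2) * v :=
    mul_le_mul_of_nonneg_left hgvar (by positivity)
  have t3 : (η / 2) * (2 * c * (F w - Fstar)) ≤ (η / 2) * S :=
    mul_le_mul_of_nonneg_left hPL (by positivity)
  nlinarith [t1, t2, t3]
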